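/- (ψ̄_x as a Shapley value) Let X be a finite set of species, 𝔽 a finite set of features, α : X → 2^𝔽 and ν : 𝔽 → ℝ≥0, and for f ∈ 𝔽 let N(f) denote the number of species in X carrying feature f. Fix x ∈ X. Under the simple field-of-bullets model with common extinction probability ε, the HED score of x is ψ_x(ε) = Σ_{f ∈ α(x)} ν(f) · ε^{N(f)−1}; averaging over ε uniformly distributed on [0,1] gives ψ̄_x = ∫_0^1 ψ_x(ε) dε = Σ_{f ∈ α(x)} ν(f) / N(f). -/
import Mathlib

open Finset

/-- `ψ̄_x` as a Shapley value: under the simple field-of-bullets model with common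
extinction probability `ε`, the HED score is `ψ_x(ε) = Σ_{f ∈ α(x)} ν(f) · ε^(N(f)−1)`
(where `N(f)` is the number of species carrying `f`), and averaging over `ε` uniform
on `[0,1]` gives `ψ̄_x = ∫_0^1 ψ_x(ε) dε = Σ_{f ∈ α(x)} ν(f)/N(f)`. -/
theorem mean_hed_eq_shapley {X 𝔽 : Type*} [Fintype X] [DecidableEq X] [DecidableEq 𝔽]
    (α : X → Finset 𝔽) (ν : 𝔽 → ℝ) (hν : ∀ f, 0 ≤ ν f) (x : X) :
    (∫ e in (0:ℝ)..1, ∑ f ∈ α x,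
        ν f * e ^ ((Finset.univ.filter (fun y => f ∈ α y)).card - 1))
      = ∑ f ∈ α x, ν f / ((Finset.univ.filter (fun y => f ∈ α y)).card : ℝ) := by
  rw [intervalIntegral.integral_finset_sum]
  · refine Finset.sum_congr rfl fun f hf => ?_
    have hpos : 0 < (Finset.univ.filter (fun y => f ∈ α y)).card :=
      Finset.card_pos.mpr ⟨x, by simp [hf]⟩
    rw [intervalIntegral.integral_const_mul, integral_pow]
    rw [Nat.sub_add_cancel hpos, one_pow, zero_pow hpos.ne', Nat.cast_sub hpos]
    push_cast
    ring
  · intro f hf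
    exact ((continuous_const.mul (continuous_pow _)).intervalIntegrable 0 1)
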